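/- Under the assumption that for each t and each x ∈ ℝ the conditional problem V^H_t(x) admits an optimal strategy, and that ϑ·S_T = 0 a.s. implies ϑ = 0 in L(S), each optimal strategy is affine in x: ϑ*(x,H) = ϑ^{0,t} + x ϑ^{1,t} for processes ϑ^{0,t}, ϑ^{1,t} ∈ Θ_{t,T}(0) not depending on x, and consequently V^H_t(x) = V^{(0)}_t − 2 V^{(1)}_t x + V^{(2)}_t x^2 for adapted processes V^{(0)}, V^{(1)}, V^{(2)} not depending on x. -/

import Mathlib

open MeasureTheory

private lemma memL2_mul_integrable {Ω : Type*} {m : MeasurableSpace Ω} {μ : Measure Ω}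
    {f g : Ω → ℝ} (hf : MemLp f 2 μ) (hg : MemLp g 2 μ) :
    Integrable (fun ω => f ω * g ω) μ := by
  have h : (fun ω => f ω * g ω)
      = fun ω => ((f ω + g ω) ^ 2 - f ω ^ 2 - g ω ^ 2) / 2 := by
    funext ω; ring
  rw [h]
  exact (((hf.add hg).integrable_sq.sub hf.integrable_sq).sub hg.integrable_sq).div_const 2

/-- Theorem 1.4, for a fixed time `t`.  `𝒢 = F_t`; `Θ` is the linear space
`Θ_{t,T}(0)` of admissible strategies vanishing on `[0,t]`, `G ϑ` represents
`∫_t^T ϑ_r dS_r` (a linear map), and `hinj` encodes the hypothesis that `ϑ·S_T = 0` a.s.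
implies `ϑ = 0`.  For every `x`, `ϑstar x` is an optimal strategy for the conditional
problem `V^H_t(x)`, whose value is `V x` (greatest a.e. lower bound characterisation).
Conclusion: the optimal strategies are affine in `x`, and the value is a quadratic
polynomial in `x` with `𝒢`-measurable coefficients not depending on `x`. -/
theorem optimal_strategy_affine_value_quadratic
    {Ω : Type*} {m : MeasurableSpace Ω} (μ : Measure Ω) [IsProbabilityMeasure μ]
    (𝒢 : MeasurableSpace Ω) (h𝒢 : 𝒢 ≤ m)
    (H : Ω → ℝ) (hH : MemLp H 2 μ)
    (Θ : Type*) [AddCommGroup Θ] [Module ℝ Θ]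
    (G : Θ → Ω → ℝ)
    (hG2 : ∀ ϑ, MemLp (G ϑ) 2 μ)
    (hGadd : ∀ ϑ₁ ϑ₂ : Θ, G (ϑ₁ + ϑ₂) = fun ω => G ϑ₁ ω + G ϑ₂ ω)
    (hGsmul : ∀ (c : ℝ) (ϑ : Θ), G (c • ϑ) = fun ω => c * G ϑ ω)
    (hinj : ∀ ϑ : Θ, (G ϑ =ᵐ[μ] 0) → ϑ = 0)
    (V : ℝ → Ω → ℝ) (ϑstar : ℝ → Θ)
    (hVle : ∀ x : ℝ, ∀ ϑ : Θ,
      V x ≤ᵐ[μ] μ[fun ω => (H ω - x - G ϑ ω) ^ 2 | 𝒢])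
    (hopt : ∀ x : ℝ,
      V x =ᵐ[μ] μ[fun ω => (H ω - x - G (ϑstar x) ω) ^ 2 | 𝒢]) :
    (∃ ϑ0 ϑ1 : Θ, ∀ x : ℝ, ϑstar x = ϑ0 + x • ϑ1) ∧
    (∃ V0 V1 V2 : Ω → ℝ,
      AEStronglyMeasurable[𝒢] V0 μ ∧ AEStronglyMeasurable[𝒢] V1 μ ∧
      AEStronglyMeasurable[𝒢] V2 μ ∧
      ∀ x : ℝ, V x =ᵐ[μ] fun ω => V0 ω - 2 * V1 ω * x + V2 ω * x ^ 2) := by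
  -- basic L² facts
  have hmem : ∀ (x : ℝ) (ϑ : Θ), MemLp (fun ω => H ω - x - G ϑ ω) 2 μ := fun x ϑ =>
    (hH.sub (memLp_const x)).sub (hG2 ϑ)
  have hint : ∀ (x : ℝ) (ϑ : Θ), Integrable (fun ω => (H ω - x - G ϑ ω) ^ 2) μ := fun x ϑ =>
    (hmem x ϑ).integrable_sq
  -- `G` of a difference
  have hGsub : ∀ u v : Θ, G (u - v) = fun ω => G u ω - G v ω := by
    intro u v
    have h1 : u - v = u + (-1 : ℝ) • v := by
      rw [neg_one_smul]; abel
    rw [h1, hGadd, hGsmul]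
    funext ω; ring
  -- Step 1: unconditional minimality
  have hmin : ∀ (x : ℝ) (ϑ : Θ),
      ∫ ω, (H ω - x - G (ϑstar x) ω) ^ 2 ∂μ ≤ ∫ ω, (H ω - x - G ϑ ω) ^ 2 ∂μ := by
    intro x ϑ
    have h1 : μ[fun ω => (H ω - x - G (ϑstar x) ω) ^ 2|𝒢]
        ≤ᵐ[μ] μ[fun ω => (H ω - x - G ϑ ω) ^ 2|𝒢] := by
      filter_upwards [hopt x, hVle x ϑ] with ω h1 h2
      rw [← h1]; exact h2
    have h2 := integral_mono_ae integrable_condExp integrable_condExp h1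
    rwa [integral_condExp h𝒢, integral_condExp h𝒢] at h2
  -- Step 2: orthogonality (first-order condition)
  have horth : ∀ (x : ℝ) (ϑ : Θ),
      ∫ ω, (H ω - x - G (ϑstar x) ω) * G ϑ ω ∂μ = 0 := by
    intro x ϑ
    set a := ∫ ω, (H ω - x - G (ϑstar x) ω) * G ϑ ω ∂μ with ha
    set b := ∫ ω, (G ϑ ω) ^ 2 ∂μ with hbd
    have hb : 0 ≤ b := integral_nonneg fun ω => sq_nonneg _
    have hia : Integrable (fun ω => (H ω - x - G (ϑstar x) ω) * G ϑ ω) μ :=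
      memL2_mul_integrable (hmem x _) (hG2 ϑ)
    have hib : Integrable (fun ω => (G ϑ ω) ^ 2) μ := (hG2 ϑ).integrable_sq
    have key : ∀ t : ℝ, 0 ≤ 2 * t * a + t ^ 2 * b := by
      intro t
      have h := hmin x (ϑstar x + (-t) • ϑ)
      have hGe : G (ϑstar x + (-t) • ϑ) = fun ω => G (ϑstar x) ω + (-t) * G ϑ ω := by
        rw [hGadd, hGsmul]
      rw [hGe] at h
      have hrw : (fun ω => (H ω - x - (G (ϑstar x) ω + (-t) * G ϑ ω)) ^ 2)
          = fun ω => (H ω - x - G (ϑstar x) ω) ^ 2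
              + (2 * t * ((H ω - x - G (ϑstar x) ω) * G ϑ ω) + t ^ 2 * (G ϑ ω) ^ 2) := by
        funext ω; ring
      have hig : Integrable (fun ω =>
          2 * t * ((H ω - x - G (ϑstar x) ω) * G ϑ ω) + t ^ 2 * (G ϑ ω) ^ 2) μ :=
        (hia.const_mul (2 * t)).add (hib.const_mul (t ^ 2))
      rw [hrw, integral_add (hint x (ϑstar x)) hig,
        integral_add (hia.const_mul (2 * t)) (hib.const_mul (t ^ 2)),
        integral_const_mul, integral_const_mul] at h
      rw [← ha, ← hbd] at h
      linarith
    have hb1 : (0 : ℝ) < b + 1 := by linarith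
    have hs := key (-(a / (b + 1)))
    have h' : 0 ≤ (2 * -(a / (b + 1)) * a + (-(a / (b + 1))) ^ 2 * b) * (b + 1) ^ 2 :=
      mul_nonneg hs (by positivity)
    have hEq : (2 * -(a / (b + 1)) * a + (-(a / (b + 1))) ^ 2 * b) * (b + 1) ^ 2
        = -(a ^ 2 * (b + 2)) := by
      field_simp
      ring
    rw [hEq] at h'
    have hle : a ^ 2 ≤ 0 := by nlinarith [sq_nonneg a, hb]
    have h2 : a ^ 2 = 0 := le_antisymm hle (sq_nonneg a)
    exact pow_eq_zero_iff (two_ne_zero) |>.mp h2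
  -- Step 3: affinity of the optimal strategy
  set ϑ0 : Θ := ϑstar 0 with hϑ0
  set ϑ1 : Θ := ϑstar 0 - ϑstar (-1) with hϑ1
  have hGϑ1 : G ϑ1 = fun ω => G (ϑstar 0) ω - G (ϑstar (-1)) ω := hGsub _ _
  have haff : ∀ x : ℝ, ϑstar x = ϑ0 + x • ϑ1 := by
    intro x
    set η : Θ := ϑ0 + x • ϑ1 with hη
    have hGη : G η = fun ω => G (ϑstar 0) ω
        + x * (G (ϑstar 0) ω - G (ϑstar (-1)) ω) := by
      rw [hη, hGadd, hGsmul, hGϑ1]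
    -- orthogonality for η
    have horthη : ∀ ϑ : Θ, ∫ ω, (H ω - x - G η ω) * G ϑ ω ∂μ = 0 := by
      intro ϑ
      have hrw : (fun ω => (H ω - x - G η ω) * G ϑ ω)
          = fun ω => (1 + x) * ((H ω - (0 : ℝ) - G (ϑstar 0) ω) * G ϑ ω)
              - x * ((H ω - (-1 : ℝ) - G (ϑstar (-1)) ω) * G ϑ ω) := by
        funext ω; rw [hGη]; ring
      have hi0 : Integrable (fun ω => (H ω - (0 : ℝ) - G (ϑstar 0) ω) * G ϑ ω) μ :=
        memL2_mul_integrable (hmem 0 _) (hG2 ϑ)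
      have hi1 : Integrable (fun ω => (H ω - (-1 : ℝ) - G (ϑstar (-1)) ω) * G ϑ ω) μ :=
        memL2_mul_integrable (hmem (-1) _) (hG2 ϑ)
      rw [hrw, integral_sub (hi0.const_mul _) (hi1.const_mul _),
        integral_const_mul, integral_const_mul, horth 0 ϑ, horth (-1) ϑ]
      ring
    -- the difference has zero stochastic integral
    set d : Θ := ϑstar x - η with hd
    have hGd : G d = fun ω => G (ϑstar x) ω - G η ω := hGsub _ _
    have hzero : ∫ ω, (G d ω) ^ 2 ∂μ = 0 := by
      have hrw : (fun ω => (G d ω) ^ 2)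
          = fun ω => (H ω - x - G η ω) * G d ω
              - (H ω - x - G (ϑstar x) ω) * G d ω := by
        funext ω; rw [hGd]; ring
      have hi0 : Integrable (fun ω => (H ω - x - G η ω) * G d ω) μ :=
        memL2_mul_integrable (hmem x _) (hG2 d)
      have hi1 : Integrable (fun ω => (H ω - x - G (ϑstar x) ω) * G d ω) μ :=
        memL2_mul_integrable (hmem x _) (hG2 d)
      rw [hrw, integral_sub hi0 hi1, horthη d, horth x d, sub_zero]
    have hGd0 : G d =ᵐ[μ] 0 := by
      have h0 : (fun ω => (G d ω) ^ 2) =ᵐ[μ] 0 :=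
        (integral_eq_zero_iff_of_nonneg (fun ω => sq_nonneg _) (hG2 d).integrable_sq).mp hzero
      filter_upwards [h0] with ω hω
      have : (G d ω) ^ 2 = 0 := hω
      exact pow_eq_zero_iff (two_ne_zero) |>.mp this
    have : d = 0 := hinj d hGd0
    rw [hd] at this
    rw [sub_eq_zero] at this
    exact this
  refine ⟨⟨ϑ0, ϑ1, haff⟩, ?_⟩
  -- Step 4: quadratic value function
  set A : Ω → ℝ := fun ω => H ω - G ϑ0 ω with hA
  set B : Ω → ℝ := fun ω => 1 + G ϑ1 ω with hB
  have hAm : MemLp A 2 μ := hH.sub (hG2 ϑ0)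
  have hBm : MemLp B 2 μ := (memLp_const (1 : ℝ)).add (hG2 ϑ1)
  refine ⟨μ[fun ω => A ω ^ 2|𝒢], μ[fun ω => A ω * B ω|𝒢], μ[fun ω => B ω ^ 2|𝒢],
    stronglyMeasurable_condExp.aestronglyMeasurable,
    stronglyMeasurable_condExp.aestronglyMeasurable,
    stronglyMeasurable_condExp.aestronglyMeasurable, ?_⟩
  intro x
  have hGx : G (ϑstar x) = fun ω => G ϑ0 ω + x * G ϑ1 ω := by
    rw [haff x, hGadd, hGsmul]
  have hiA : Integrable (fun ω => A ω ^ 2) μ := hAm.integrable_sq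
  have hiAB : Integrable (fun ω => A ω * B ω) μ := memL2_mul_integrable hAm hBm
  have hiB : Integrable (fun ω => B ω ^ 2) μ := hBm.integrable_sq
  have hrw : (fun ω => (H ω - x - G (ϑstar x) ω) ^ 2)
      = (fun ω => A ω ^ 2) + ((-(2 * x)) • (fun ω => A ω * B ω)
          + (x ^ 2) • fun ω => B ω ^ 2) := by
    funext ω
    simp only [Pi.add_apply, Pi.smul_apply, smul_eq_mul, hGx, hA, hB]
    ring
  have hce : μ[fun ω => (H ω - x - G (ϑstar x) ω) ^ 2|𝒢]
      =ᵐ[μ] μ[fun ω => A ω ^ 2|𝒢]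
        + ((-(2 * x)) • μ[fun ω => A ω * B ω|𝒢] + (x ^ 2) • μ[fun ω => B ω ^ 2|𝒢]) := by
    rw [hrw]
    refine (condExp_add hiA ((hiAB.smul _).add (hiB.smul _)) _).trans ?_
    refine Filter.EventuallyEq.add (Filter.EventuallyEq.refl _ _) ?_
    refine (condExp_add (hiAB.smul _) (hiB.smul _) _).trans ?_
    exact Filter.EventuallyEq.add (condExp_smul _ _ _) (condExp_smul _ _ _)
  filter_upwards [hopt x, hce] with ω h1 h2
  rw [h1, h2]
  simp only [Pi.add_apply, Pi.smul_apply, smul_eq_mul]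
  ring
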